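/- Let P be a finite poset and G a group of automorphisms of P, with θ the equivalence relation whose classes are the G-orbits. Then the quotient relation on P/θ, defined by [p] ≤ [q] iff ∃ g, h ∈ G with g(p) ≤ h(q), is a partial order. -/
import Mathlib

private lemma aux_pow_le {P : Type*} [PartialOrder P]
    {G : Type*} [Group G] [MulAction G P]
    (hord : ∀ (g : G) (p q : P), p ≤ q ↔ g • p ≤ g • q)
    (k : G) (p : P) (h : k • p ≤ p) : ∀ n : ℕ, k ^ n • p ≤ p := by
  intro n
  induction n with
  | zero => simp
  | succ n ih =>
    have : k • (k ^ n • p) ≤ k • p := (hord k _ _).mp ih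
    calc k ^ (n + 1) • p = k • (k ^ n • p) := by rw [pow_succ', mul_smul]
    _ ≤ k • p := this
    _ ≤ p := h

private lemma aux_fixed {P : Type*} [PartialOrder P] [Finite P]
    {G : Type*} [Group G] [MulAction G P]
    (hord : ∀ (g : G) (p q : P), p ≤ q ↔ g • p ≤ g • q)
    (k : G) (p : P) (h : k • p ≤ p) : k • p = p := by
  obtain ⟨i, j, hij, heq⟩ := Finite.exists_ne_map_eq_of_infinite (fun n : ℕ => k ^ n • p)
  wlog hlt : i < j generalizing i j
  · exact this j i hij.symm heq.symm (by omega)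
  have hm : k ^ (j - i) • p = p := by
    have : k ^ i • (k ^ (j - i) • p) = k ^ i • p := by
      rw [← mul_smul, ← pow_add]
      have : i + (j - i) = j := by omega
      rw [this]
      exact heq.symm
    exact smul_left_cancel _ this
  have hm1 : 1 ≤ j - i := by omega
  have hle : p ≤ k • p := by
    have h1 : k ^ (j - i - 1) • p ≤ p := aux_pow_le hord k p h _
    have h2 : k • (k ^ (j - i - 1) • p) ≤ k • p := (hord k _ _).mp h1
    have h3 : k • (k ^ (j - i - 1) • p) = p := by
      rw [← mul_smul, ← pow_succ']
      have : j - i - 1 + 1 = j - i := by omega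
      rw [this]
      exact hm
    rwa [h3] at h2
  exact le_antisymm h hle

theorem orbit_quotient_is_partialOrder
    {P : Type*} [PartialOrder P] [Finite P]
    (G : Type*) [Group G] [MulAction G P]
    (hord : ∀ (g : G) (p q : P), p ≤ q ↔ g • p ≤ g • q) :
    IsPartialOrder (Quotient (MulAction.orbitRel G P))
      (fun a b => ∃ p q : P, a = Quotient.mk (MulAction.orbitRel G P) p ∧
        b = Quotient.mk (MulAction.orbitRel G P) q ∧
        ∃ g h : G, g • p ≤ h • q) := by
  refine { refl := ?_, trans := ?_, antisymm := ?_ }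
  · intro a
    obtain ⟨p, rfl⟩ := Quotient.exists_rep a
    exact ⟨p, p, rfl, rfl, 1, 1, le_refl _⟩
  · rintro a b c ⟨p, q, rfl, hb, g, h, hpq⟩ ⟨q', r, hb', rfl, g', h', hqr⟩
    have hqq' : MulAction.orbitRel G P q q' := Quotient.exact (hb.symm.trans hb')
    obtain ⟨s, hs0⟩ := hqq'
    have hs : s • q' = q := hs0
    refine ⟨p, r, rfl, rfl, g' * s⁻¹ * h⁻¹ * g, h', ?_⟩
    have h1 : (g' * s⁻¹ * h⁻¹) • (g • p) ≤ (g' * s⁻¹ * h⁻¹) • (h • q) :=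
      (hord _ _ _).mp hpq
    have h2 : (g' * s⁻¹ * h⁻¹) • (h • q) = g' • q' := by
      rw [← hs]
      simp only [← mul_smul]
      congr 1
      group
    calc (g' * s⁻¹ * h⁻¹ * g) • p = (g' * s⁻¹ * h⁻¹) • (g • p) := by rw [mul_smul]
    _ ≤ (g' * s⁻¹ * h⁻¹) • (h • q) := h1
    _ = g' • q' := h2
    _ ≤ h' • r := hqr
  · rintro a b ⟨p, q, rfl, hb, g, h, hpq⟩ ⟨q', p', hb', ha', g', h', hqp⟩
    have hqq' : MulAction.orbitRel G P q q' := Quotient.exact (hb.symm.trans hb')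
    have hpp' : MulAction.orbitRel G P p p' := Quotient.exact ha'
    obtain ⟨s, hs0⟩ := hqq'
    obtain ⟨t, ht0⟩ := hpp'
    have hs : s • q' = q := hs0
    have ht : t • p' = p := ht0
    -- u • p ≤ q with u = h⁻¹ * g
    have hu : (h⁻¹ * g) • p ≤ q := by
      have h0 := (hord h⁻¹ _ _).mp hpq
      rw [inv_smul_smul] at h0
      rw [mul_smul]
      exact h0
    -- v • q ≤ p with v = t * h'⁻¹ * g' * s⁻¹
    have hv : (t * h'⁻¹ * g' * s⁻¹) • q ≤ p := by
      have h1 : (t * h'⁻¹) • (g' • q') ≤ (t * h'⁻¹) • (h' • p') := (hord _ _ _).mp hqp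
      have h2 : (t * h'⁻¹) • (h' • p') = p := by
        rw [← mul_smul, mul_assoc, inv_mul_cancel, mul_one, ht]
      have h3 : (t * h'⁻¹ * g' * s⁻¹) • q = (t * h'⁻¹) • (g' • q') := by
        rw [← hs]
        simp only [← mul_smul]
        congr 1
        group
      rw [h3]
      exact h2 ▸ h1
    set u := h⁻¹ * g with hu_def
    set v := t * h'⁻¹ * g' * s⁻¹ with hv_def
    have hk : (v * u) • p ≤ p := by
      calc (v * u) • p = v • (u • p) := mul_smul _ _ _
      _ ≤ v • q := (hord v _ _).mp hu
      _ ≤ p := hv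
    have hfix : (v * u) • p = p := aux_fixed hord _ _ hk
    have hqu : q = u • p := by
      have h1 : v • q ≤ v • (u • p) := by
        rw [← mul_smul, hfix]; exact hv
      have h2 : q ≤ u • p := (hord v _ _).mpr h1
      exact le_antisymm h2 hu
    have : MulAction.orbitRel G P q p := ⟨u, hqu.symm⟩
    exact (Quotient.sound this).symm.trans hb.symm
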